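/- Let k, m ≥ 1, let n : Fin k → ℕ, and let ν : Fin m → ℤ satisfy Σ_{p} (ν_p + 1) = 0. Equip R := ℂ[q₁, …, q_k] with the weights w_j := n_j + 2 on the variables. Let A be a skew-symmetric k×k matrix over R (Aᵀ = −A) whose entry A i j is quasi-homogeneous of quasi-degree n_i + n_j + 2 relative to w; let B be a k×m matrix over R whose entry B i p is quasi-homogeneous of quasi-degree n_i + ν_p + 2; and let C be a skew-symmetric m×m matrix over R (Cᵀ = −C) whose entry C l p is quasi-homogeneous of quasi-degree ν_l + ν_p + 2 and whose determinant det C is a unit of R. Then the matrix Λ := A + B·C⁻¹·Bᵀ (with C⁻¹ = (det C)⁻¹ • adjugate C, a matrix over R) is skew-symmetric and each entry Λ i j is quasi-homogeneous of quasi-degree n_i + n_j + 2 relative to w. -/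
import Mathlib


open MvPolynomial Matrix

section Aux

variable {k : ℕ} {w : Fin k → ℤ}

/-- A polynomial that is weighted homogeneous of degree 0 for positive weights is constant. -/
lemma aux_hom0_eq_C {φ : MvPolynomial (Fin k) ℂ} (hw : ∀ j, 0 < w j)
    (hφ : IsWeightedHomogeneous w φ 0) :
    φ = MvPolynomial.C (MvPolynomial.coeff 0 φ) := by
  have hzero : ∀ d : Fin k →₀ ℕ, MvPolynomial.coeff d φ ≠ 0 → d = 0 := by
    intro d hd
    by_contra hne
    obtain ⟨s, hs⟩ : ∃ s, d s ≠ 0 := by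
      by_contra h
      push_neg at h
      exact hne (Finsupp.ext fun s => h s)
    have h1 : w s ≤ Finsupp.weight w d :=
      Finsupp.le_weight_of_ne_zero (fun t => (hw t).le) hs
    have h2 : Finsupp.weight w d = 0 := hφ hd
    rw [h2] at h1
    exact absurd h1 (not_le.mpr (hw s))
  ext d
  rw [MvPolynomial.coeff_C]
  split_ifs with h
  · rw [← h]
  · by_contra hne
    exact h ((hzero d hne) ▸ rfl)

/-- Determinant of a matrix with entries homogeneous of degree `a l + b p`. -/
lemma aux_det_hom {m : ℕ} (M : Matrix (Fin m) (Fin m) (MvPolynomial (Fin k) ℂ))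
    (a b : Fin m → ℤ)
    (h : ∀ l p, IsWeightedHomogeneous w (M l p) (a l + b p)) :
    IsWeightedHomogeneous w M.det ((∑ l, a l) + ∑ p, b p) := by
  rw [Matrix.det_apply']
  apply IsWeightedHomogeneous.sum
  intro σ _
  have h1 : IsWeightedHomogeneous w
      (((Equiv.Perm.sign σ : ℤ) : MvPolynomial (Fin k) ℂ)) 0 := by
    have := MvPolynomial.isWeightedHomogeneous_C (R := ℂ) w
      (((Equiv.Perm.sign σ : ℤ) : ℂ))
    rwa [show (MvPolynomial.C (((Equiv.Perm.sign σ : ℤ) : ℂ)) : MvPolynomial (Fin k) ℂ)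
        = ((Equiv.Perm.sign σ : ℤ) : MvPolynomial (Fin k) ℂ) from
      (map_intCast (MvPolynomial.C : ℂ →+* MvPolynomial (Fin k) ℂ) _)] at this
  have h2 : IsWeightedHomogeneous w (∏ i, M (σ i) i) (∑ i, (a (σ i) + b i)) :=
    IsWeightedHomogeneous.prod _ _ _ (fun i _ => h _ _)
  have h3 := h1.mul h2
  rw [zero_add] at h3
  have h4 : (∑ i, (a (σ i) + b i)) = (∑ l, a l) + ∑ p, b p := by
    rw [Finset.sum_add_distrib, Equiv.sum_comp σ a]
  rwa [h4] at h3

/-- Adjugate entries are homogeneous with the complementary degrees. -/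
lemma aux_adjugate_hom {m : ℕ} (M : Matrix (Fin m) (Fin m) (MvPolynomial (Fin k) ℂ))
    (a b : Fin m → ℤ)
    (h : ∀ l p, IsWeightedHomogeneous w (M l p) (a l + b p)) (i j : Fin m) :
    IsWeightedHomogeneous w (M.adjugate i j)
      (((∑ l, a l) - a j) + ((∑ p, b p) - b i)) := by
  rw [Matrix.adjugate_apply]
  have hent : ∀ l p, IsWeightedHomogeneous w ((M.updateRow j (Pi.single i 1)) l p)
      (Function.update a j (-(b i)) l + b p) := by
    intro l p
    rcases eq_or_ne l j with rfl | hl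
    · rw [Matrix.updateRow_self, Function.update_self]
      rcases eq_or_ne p i with rfl | hp
      · rw [Pi.single_eq_same]
        have : -(b p) + b p = 0 := by ring
        rw [this]
        exact MvPolynomial.isWeightedHomogeneous_one ℂ w
      · rw [Pi.single_eq_of_ne hp]
        exact MvPolynomial.isWeightedHomogeneous_zero ℂ w _
    · rw [Matrix.updateRow_ne hl, Function.update_of_ne hl]
      exact h l p
  have key := aux_det_hom (M.updateRow j (Pi.single i 1))
    (Function.update a j (-(b i))) b hent
  · have hsum : (∑ l, Function.update a j (-(b i)) l)
        = (∑ l, a l) - a j + (-(b i)) := by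
      rw [Finset.sum_update_of_mem (Finset.mem_univ j)]
      have : ∑ x ∈ Finset.univ \ {j}, a x = (∑ l, a l) - a j := by
        rw [Finset.sum_eq_sum_sdiff_singleton_add (Finset.mem_univ j) a]
        ring
      rw [this]; ring
    rw [hsum] at key
    have : ((∑ l, a l) - a j + (-(b i))) + ∑ p, b p
        = ((∑ l, a l) - a j) + ((∑ p, b p) - b i) := by ring
    rwa [this] at key

end Aux

/-- The Dirac-reduced matrix `Λ = A + B C⁻¹ Bᵀ` of the transverse Poisson structure
is skew-symmetric with polynomial entries that are quasi-homogeneous, of quasi-degree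
`n i + n j + 2` in position `(i,j)`, relative to the weights `w j = n j + 2`. -/
theorem dirac_reduced_matrix_skew_and_weighted_homogeneous
    (k m : ℕ) (hk : 1 ≤ k) (hm : 1 ≤ m)
    (n : Fin k → ℕ) (ν : Fin m → ℤ) (hν : (∑ p, (ν p + 1)) = 0)
    (A : Matrix (Fin k) (Fin k) (MvPolynomial (Fin k) ℂ))
    (B : Matrix (Fin k) (Fin m) (MvPolynomial (Fin k) ℂ))
    (C : Matrix (Fin m) (Fin m) (MvPolynomial (Fin k) ℂ))
    (hAskew : Aᵀ = -A)
    (hA : ∀ i j, IsWeightedHomogeneous (fun j => (n j : ℤ) + 2) (A i j)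
      ((n i : ℤ) + (n j : ℤ) + 2))
    (hB : ∀ i p, IsWeightedHomogeneous (fun j => (n j : ℤ) + 2) (B i p)
      ((n i : ℤ) + ν p + 2))
    (hCskew : Cᵀ = -C)
    (hC : ∀ l p, IsWeightedHomogeneous (fun j => (n j : ℤ) + 2) (C l p)
      (ν l + ν p + 2))
    (hCdet : IsUnit C.det) :
    (A + B * C⁻¹ * Bᵀ)ᵀ = -(A + B * C⁻¹ * Bᵀ) ∧
    ∀ i j, IsWeightedHomogeneous (fun j => (n j : ℤ) + 2)
      ((A + B * C⁻¹ * Bᵀ) i j) ((n i : ℤ) + (n j : ℤ) + 2) := by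
  set w : Fin k → ℤ := fun j => (n j : ℤ) + 2 with hw
  have hwpos : ∀ j, 0 < w j := by
    intro j
    simp only [hw]
    positivity
  constructor
  · -- skew-symmetry
    have hCC : C * C⁻¹ = 1 := Matrix.mul_nonsing_inv C hCdet
    have hneg : (-C)⁻¹ = -C⁻¹ := Matrix.inv_eq_right_inv (by rw [neg_mul_neg, hCC])
    rw [Matrix.transpose_add, hAskew, Matrix.transpose_mul, Matrix.transpose_mul,
      Matrix.transpose_transpose, Matrix.transpose_nonsing_inv, hCskew, hneg]
    rw [Matrix.neg_mul, Matrix.mul_neg, ← Matrix.mul_assoc, neg_add_rev]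
    abel
  · -- quasi-homogeneity
    -- the determinant of C is homogeneous of degree 0
    have hCent : ∀ l p, IsWeightedHomogeneous w (C l p) ((ν l + 1) + (ν p + 1)) := by
      intro l p
      have := hC l p
      rwa [show ν l + ν p + 2 = (ν l + 1) + (ν p + 1) from by ring] at this
    have hdet0 : IsWeightedHomogeneous w C.det 0 := by
      have := aux_det_hom C (fun l => ν l + 1) (fun p => ν p + 1) hCent
      rwa [hν, add_zero] at this
    -- the inverse of det C is a constant, homogeneous of degree 0
    have hdetC : C.det = MvPolynomial.C (MvPolynomial.coeff 0 C.det) :=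
      aux_hom0_eq_C hwpos hdet0
    set c : ℂ := MvPolynomial.coeff 0 C.det with hc
    have hc0 : c ≠ 0 := by
      intro h
      rw [h, map_zero] at hdetC
      rw [hdetC] at hCdet
      exact not_isUnit_zero hCdet
    have hinv : Ring.inverse C.det = MvPolynomial.C c⁻¹ := by
      have h1 : C.det * MvPolynomial.C c⁻¹ = 1 := by
        rw [hdetC, ← _root_.map_mul, mul_inv_cancel₀ hc0, _root_.map_one]
      calc Ring.inverse C.det
          = Ring.inverse C.det * (C.det * MvPolynomial.C c⁻¹) := by rw [h1, mul_one]
        _ = (Ring.inverse C.det * C.det) * MvPolynomial.C c⁻¹ := by ring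
        _ = MvPolynomial.C c⁻¹ := by rw [Ring.inverse_mul_cancel _ hCdet, one_mul]
    -- entries of C⁻¹ are homogeneous
    have hCinv : ∀ p l, IsWeightedHomogeneous w (C⁻¹ p l)
        ((-(ν l + 1)) + (-(ν p + 1))) := by
      intro p l
      have hadj : IsWeightedHomogeneous w (C.adjugate p l)
          ((-(ν l + 1)) + (-(ν p + 1))) := by
        have := aux_adjugate_hom C (fun l => ν l + 1) (fun p => ν p + 1) hCent p l
        rwa [hν, zero_sub, zero_sub] at this
      have hconst : IsWeightedHomogeneous w (MvPolynomial.C c⁻¹ : MvPolynomial (Fin k) ℂ) 0 :=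
        MvPolynomial.isWeightedHomogeneous_C w _
      have : C⁻¹ p l = MvPolynomial.C c⁻¹ * C.adjugate p l := by
        rw [Matrix.inv_def, Matrix.smul_apply, hinv, smul_eq_mul]
      rw [this]
      have := hconst.mul hadj
      rwa [zero_add] at this
    intro i j
    show IsWeightedHomogeneous w _ _
    have hadd : (A + B * C⁻¹ * Bᵀ) i j = A i j + (B * C⁻¹ * Bᵀ) i j := rfl
    rw [hadd]
    apply (hA i j).add
    rw [Matrix.mul_apply]
    apply IsWeightedHomogeneous.sum
    intro l _
    rw [Matrix.mul_apply]
    have houter : IsWeightedHomogeneous w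
        (∑ p, B i p * C⁻¹ p l) ((n i : ℤ) - (ν l + 1) + 1) := by
      apply IsWeightedHomogeneous.sum
      intro p _
      have := (hB i p).mul (hCinv p l)
      rwa [show ((n i : ℤ) + ν p + 2) + ((-(ν l + 1)) + (-(ν p + 1)))
          = (n i : ℤ) - (ν l + 1) + 1 from by ring] at this
    have hBt : Bᵀ l j = B j l := rfl
    rw [hBt]
    have := houter.mul (hB j l)
    rwa [show ((n i : ℤ) - (ν l + 1) + 1) + ((n j : ℤ) + ν l + 2)
        = (n i : ℤ) + (n j : ℤ) + 2 from by ring] at this
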